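/- Let M be a positively ordered monoid that is preminimally ordered, simple, and stably finite, and let a, b, x ∈ M satisfy a + x ≤ b + x. Then there exists k₀ ∈ ℕ such that k·a ≤ k·b for all k ≥ k₀. -/

import Mathlib

/-- Let `M` be a positively ordered monoid that is
preminimally ordered, simple, and stably finite, and let `a b x : M` satisfy
`a + x ≤ b + x`.  Then there exists `k₀` such that `k•a ≤ k•b` for all
`k ≥ k₀`. -/
theorem stmt4 {M : Type*} [AddCommMonoid M] [PartialOrder M] [IsOrderedAddMonoid M] (h0 : ∀ z : M, 0 ≤ z)
    (hpremin : ∀ a b x y : M, a + x ≤ b + x → x ≤ y → a + y ≤ b + y)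
    (hsimple : ∀ a b : M, b ≠ 0 → ∃ n : ℕ, a ≤ n • b)
    (hsf : ∀ a x : M, x ≠ 0 → a ≠ a + x)
    (a b x : M) (h : a + x ≤ b + x) :
    ∃ k₀ : ℕ, ∀ k : ℕ, k₀ ≤ k → k • a ≤ k • b := by
  by_cases ha : a = 0
  · exact ⟨0, fun k _ => by simpa [ha] using h0 (k • b)⟩
  by_cases hb : b = 0
  · -- then a + x ≤ x, and x ≤ a + x, so x = x + a, contradicting stable finiteness
    exfalso
    have h1 : a + x ≤ x := by simpa [hb] using h
    have h2 : x ≤ x + a := le_add_of_nonneg_right (h0 a)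
    have h3 : x = x + a := le_antisymm h2 (by rwa [add_comm] at h1)
    exact hsf x a ha h3
  obtain ⟨n, hn⟩ := hsimple x a ha
  obtain ⟨m, hm⟩ := hsimple x b hb
  refine ⟨n + m, fun k hk => ?_⟩
  -- key step: trade one `a` for one `b` in the presence of enough other terms
  have step : ∀ j i : ℕ, (n ≤ j ∨ m ≤ i) →
      a + (j • a + i • b) ≤ b + (j • a + i • b) := by
    intro j i hji
    refine hpremin a b x _ h ?_
    rcases hji with hj | hi
    · have h1 : x ≤ j • a := by
        calc x ≤ n • a := hn
          _ ≤ n • a + (j - n) • a := le_add_of_nonneg_right (h0 _)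
          _ = j • a := by rw [← add_nsmul]; congr 1; omega
      exact h1.trans (le_add_of_nonneg_right (h0 _))
    · have h1 : x ≤ i • b := by
        calc x ≤ m • b := hm
          _ ≤ m • b + (i - m) • b := le_add_of_nonneg_right (h0 _)
          _ = i • b := by rw [← add_nsmul]; congr 1; omega
      exact h1.trans (le_add_of_nonneg_left (h0 _))
  have main : ∀ i, i ≤ k → k • a ≤ (k - i) • a + i • b := by
    intro i
    induction i with
    | zero => intro _; simp
    | succ i ih =>
      intro hik
      have hi : i ≤ k := (Nat.lt_of_succ_le hik).le
      have hsplit : k - i = (k - (i + 1)) + 1 := by omega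
      calc k • a ≤ (k - i) • a + i • b := ih hi
        _ = a + ((k - (i + 1)) • a + i • b) := by
            rw [hsplit, add_nsmul, one_nsmul]; abel
        _ ≤ b + ((k - (i + 1)) • a + i • b) := step _ _ (by omega)
        _ = (k - (i + 1)) • a + (i + 1) • b := by
            rw [add_nsmul, one_nsmul]; abel
  simpa using main k le_rfl
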